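/- Let q > 5 and C₁, C₂, C₃ > 0. Suppose f : 𝕋³ × ℝ³ → [0,∞) is continuously differentiable and satisfies (1) ‖f‖_{L∞_q} + ‖∇_{x,v} f‖_{L∞_q} < C₁, (2) ρ_f(x) + |U_f(x)| + T_f(x) < C₂ for all x ∈ 𝕋³, and (3) ρ_f(x) > C₃ and T_f(x) > C₃ for all x ∈ 𝕋³. Then there exists a constant C > 0, depending only on q, C₁, C₂, C₃, such that ‖𝓜(f)‖_{L∞_q} + ‖∇_{x,v} 𝓜(f)‖_{L∞_q} ≤ C ( ‖f‖_{L∞_q} + ‖∇_{x,v} f‖_{L∞_q} ). -/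

import Mathlib

open MeasureTheory Real
open scoped ENNReal

noncomputable section

/-- Euclidean space `ℝ³`. -/
abbrev E3 : Type := EuclideanSpace ℝ (Fin 3)

/-- Integer translation vector, used to express periodicity in `x`
(a function on `𝕋³ = ℝ³/ℤ³` is a `ℤ³`-periodic function on `ℝ³`). -/
def intVec (k : Fin 3 → ℤ) : E3 := WithLp.toLp 2 (fun i => (k i : ℝ))

/-- Local density `ρ_f(x) = ∫ f(x,v) dv`. -/
def densX (f : E3 × E3 → ℝ) (x : E3) : ℝ := ∫ v, f (x, v)

/-- Bulk velocity `U_f(x)`, defined by `ρ_f(x) U_f(x) = ∫ v f(x,v) dv`. -/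
def bulkX (f : E3 × E3 → ℝ) (x : E3) : E3 := (densX f x)⁻¹ • ∫ v, f (x, v) • v

/-- Temperature `T_f(x)`, defined by `3 ρ_f(x) T_f(x) = ∫ |v - U_f(x)|² f(x,v) dv`. -/
def tempX (f : E3 × E3 → ℝ) (x : E3) : ℝ :=
  (3 * densX f x)⁻¹ * ∫ v, ‖v - bulkX f x‖ ^ 2 * f (x, v)

/-- The local Maxwellian
`𝓜(f)(x,v) = ρ_f(x) (2π T_f(x))^{-3/2} exp(-|v - U_f(x)|²/(2 T_f(x)))`. -/
def maxwX (f : E3 × E3 → ℝ) : E3 × E3 → ℝ := fun p =>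
  densX f p.1 * (2 * π * tempX f p.1) ^ (-(3 : ℝ) / 2) *
    Real.exp (-‖p.2 - bulkX f p.1‖ ^ 2 / (2 * tempX f p.1))

/-- Weighted norm `‖g‖_{L∞_q} = ess sup_{(x,v)} (1 + |v|^q)|g(x,v)|` (valued in `ℝ≥0∞`);
for `g` periodic in `x` this agrees with the essential supremum over `𝕋³ × ℝ³`. -/
def wnormX (q : ℝ) (g : E3 × E3 → ℝ) : ℝ≥0∞ :=
  essSup (fun p => ENNReal.ofReal ((1 + ‖p.2‖ ^ q) * |g p|)) volume

/-! ### Auxiliary lemmas -/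

open Filter in
lemma aux_le_of_ae_le {h : E3 × E3 → ℝ} (hc : Continuous h) {M : ℝ}
    (hae : ∀ᵐ p : E3 × E3, h p ≤ M) : ∀ p, h p ≤ M := by
  by_contra hcon
  push_neg at hcon
  obtain ⟨p, hp⟩ := hcon
  have hopen : IsOpen {p : E3 × E3 | M < h p} := isOpen_lt continuous_const hc
  have hpos : 0 < volume {p : E3 × E3 | M < h p} :=
    hopen.measure_pos volume ⟨p, hp⟩
  rw [ae_iff] at hae
  have h0 : volume {p : E3 × E3 | M < h p} = 0 := by
    convert hae using 2
    ext r
    simp [not_le]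
  exact absurd h0 hpos.ne'

lemma poly_le_exp {a s : ℝ} (ha : 0 < a) (hs : 0 < s) (t : ℝ) (ht : 0 ≤ t) :
    1 + t ^ s ≤ (1 + Real.exp (s ^ 2 / (2 * a))) * Real.exp (a * t ^ 2) := by
  have h1 : (1 : ℝ) ≤ Real.exp (a * t ^ 2) := Real.one_le_exp (by positivity)
  have h2 : t ^ s ≤ Real.exp (s ^ 2 / (2 * a)) * Real.exp (a * t ^ 2) := by
    rcases le_or_gt t 1 with h | h
    · have : t ^ s ≤ 1 := Real.rpow_le_one ht h hs.le
      nlinarith [Real.one_le_exp (show (0:ℝ) ≤ s ^ 2 / (2 * a) by positivity)]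
    · have ht0 : (0 : ℝ) < t := lt_trans one_pos h
      rw [Real.rpow_def_of_pos ht0, ← Real.exp_add]
      apply Real.exp_le_exp.mpr
      have hlog : Real.log t ≤ t - 1 := Real.log_le_sub_one_of_pos ht0
      have h3 : Real.log t * s ≤ s * t := by nlinarith [hs.le, Real.log_nonneg h.le]
      have key : s * t - a * t ^ 2 ≤ s ^ 2 / (2 * a) := by
        rw [le_div_iff₀ (by positivity : (0:ℝ) < 2 * a)]
        nlinarith [sq_nonneg (s - a * t)]
      linarith
  linarith

lemma exp_sub_exp_le_of_le {t s : ℝ} (h : t ≤ s) :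
    Real.exp s - Real.exp t ≤ (s - t) * Real.exp s := by
  have h1 := Real.add_one_le_exp (t - s)
  have h2 : Real.exp (t - s) * Real.exp s = Real.exp t := by
    rw [← Real.exp_add]; ring_nf
  nlinarith [Real.exp_pos s]

lemma abs_exp_sub_exp_le (s t : ℝ) :
    |Real.exp s - Real.exp t| ≤ max (Real.exp s) (Real.exp t) * |s - t| := by
  rcases le_total t s with h | h
  · rw [abs_of_nonneg (by nlinarith [Real.exp_le_exp.mpr h] : (0:ℝ) ≤ Real.exp s - Real.exp t),
      abs_of_nonneg (by linarith : (0:ℝ) ≤ s - t)]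
    calc Real.exp s - Real.exp t ≤ (s - t) * Real.exp s := exp_sub_exp_le_of_le h
      _ ≤ max (Real.exp s) (Real.exp t) * (s - t) := by
          nlinarith [le_max_left (Real.exp s) (Real.exp t), Real.exp_pos s]
  · rw [abs_sub_comm, abs_sub_comm s t,
      abs_of_nonneg (by nlinarith [Real.exp_le_exp.mpr h] : (0:ℝ) ≤ Real.exp t - Real.exp s),
      abs_of_nonneg (by linarith : (0:ℝ) ≤ t - s)]
    calc Real.exp t - Real.exp s ≤ (t - s) * Real.exp t := exp_sub_exp_le_of_le h
      _ ≤ max (Real.exp s) (Real.exp t) * (t - s) := by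
          nlinarith [le_max_right (Real.exp s) (Real.exp t), Real.exp_pos t]

lemma one_add_rpow_le {q t : ℝ} (hq : 0 ≤ q) (ht : 0 ≤ t) :
    (1 + t) ^ q ≤ 2 ^ q * (1 + t ^ q) := by
  have h2 : (0:ℝ) < 2 := two_pos
  rcases le_total t 1 with h | h
  · calc (1 + t) ^ q ≤ 2 ^ q := Real.rpow_le_rpow (by linarith) (by linarith) hq
      _ ≤ 2 ^ q * (1 + t ^ q) := by
          nlinarith [Real.rpow_nonneg ht q, Real.rpow_nonneg (le_of_lt h2) q,
            Real.rpow_pos_of_pos h2 q]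
  · calc (1 + t) ^ q ≤ (2 * t) ^ q := Real.rpow_le_rpow (by linarith) (by linarith) hq
      _ = 2 ^ q * t ^ q := Real.mul_rpow (by norm_num) ht
      _ ≤ 2 ^ q * (1 + t ^ q) := by
          nlinarith [Real.rpow_pos_of_pos h2 q]

lemma cont_weight_inv {q : ℝ} (hq : 0 < q) :
    Continuous (fun v : E3 => (1 + ‖v‖ ^ q)⁻¹) := by
  apply Continuous.inv₀
  · exact continuous_const.add (continuous_norm.rpow_const fun v => Or.inr hq.le)
  · intro v
    positivity

lemma integrable_dom {q : ℝ} (hq : 5 < q) :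
    Integrable (fun v : E3 => (1 + ‖v‖) ^ 2 * (1 + ‖v‖ ^ q)⁻¹) := by
  have hq0 : (0:ℝ) < q := by linarith
  have hfin : (Module.finrank ℝ E3 : ℝ) < q - 2 := by
    simp only [finrank_euclideanSpace_fin]
    norm_num
    linarith
  have hcont : Continuous (fun v : E3 => (1 + ‖v‖) ^ 2 * (1 + ‖v‖ ^ q)⁻¹) :=
    (((continuous_const.add continuous_norm).pow 2)).mul (cont_weight_inv hq0)
  refine ((integrable_one_add_norm (E := E3) hfin).const_mul ((2:ℝ) ^ q)).mono'
    hcont.aestronglyMeasurable (ae_of_all _ ?_)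
  intro v
  set t := ‖v‖ with htdef
  have ht : 0 ≤ t := norm_nonneg v
  have h1t : (0:ℝ) < 1 + t := by linarith
  have hw : (0:ℝ) < 1 + t ^ q := by positivity
  rw [Real.norm_eq_abs, abs_of_nonneg (by positivity)]
  have key : (1 + t ^ q)⁻¹ ≤ 2 ^ q * ((1 + t) ^ q)⁻¹ := by
    have h2 : (1 + t) ^ q / 2 ^ q ≤ 1 + t ^ q := by
      rw [div_le_iff₀ (by positivity)]
      calc (1+t)^q ≤ 2^q * (1+t^q) := one_add_rpow_le hq0.le ht
        _ = (1+t^q) * 2^q := mul_comm _ _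
    calc (1 + t ^ q)⁻¹ ≤ ((1 + t) ^ q / 2 ^ q)⁻¹ := by
          apply inv_anti₀ (by positivity) h2
      _ = 2 ^ q * ((1 + t) ^ q)⁻¹ := by rw [inv_div]; ring
  calc (1 + t) ^ 2 * (1 + t ^ q)⁻¹ ≤ (1 + t) ^ 2 * (2 ^ q * ((1 + t) ^ q)⁻¹) :=
        mul_le_mul_of_nonneg_left key (by positivity)
    _ = 2 ^ q * (1 + t) ^ (-(q - 2)) := by
        rw [show -(q - 2) = 2 + (-q) by ring, Real.rpow_add h1t, Real.rpow_neg h1t.le]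
        rw [show ((2:ℝ):ℝ) = ((2:ℕ):ℝ) by norm_num, Real.rpow_natCast]
        ring

lemma integrable_of_dom {q : ℝ} (hq : 5 < q) {F : Type*} [NormedAddCommGroup F] {g : E3 → F}
    (hg : AEStronglyMeasurable g volume) {K : ℝ}
    (hb : ∀ v, ‖g v‖ ≤ K * ((1 + ‖v‖) ^ 2 * (1 + ‖v‖ ^ q)⁻¹)) :
    Integrable g :=
  ((integrable_dom hq).const_mul K).mono' hg (ae_of_all _ hb)

lemma wnorm_le_of_forall {q : ℝ} {g : E3 × E3 → ℝ} {M : ℝ}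
    (h : ∀ p : E3 × E3, (1 + ‖p.2‖ ^ q) * |g p| ≤ M) :
    wnormX q g ≤ ENNReal.ofReal M :=
  essSup_le_of_ae_le _ (ae_of_all _ fun p => ENNReal.ofReal_le_ofReal (h p))

lemma forall_of_wnorm {q : ℝ} (hq : 0 < q) {g : E3 × E3 → ℝ} (hg : Continuous g) {M : ℝ}
    (hM : 0 ≤ M) (h : wnormX q g ≤ ENNReal.ofReal M) :
    ∀ p : E3 × E3, (1 + ‖p.2‖ ^ q) * |g p| ≤ M := by
  have hae : ∀ᵐ p : E3 × E3,
      ENNReal.ofReal ((1 + ‖p.2‖ ^ q) * |g p|) ≤ ENNReal.ofReal M :=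
    (ENNReal.ae_le_essSup _).mono fun p hp => le_trans hp h
  have hae' : ∀ᵐ p : E3 × E3, (1 + ‖p.2‖ ^ q) * |g p| ≤ M :=
    hae.mono fun p hp => by
      rwa [ENNReal.ofReal_le_ofReal_iff hM] at hp
  refine aux_le_of_ae_le ?_ hae'
  exact (continuous_const.add ((continuous_snd.norm).rpow_const
    fun p => Or.inr hq.le)).mul hg.abs

set_option maxHeartbeats 10000000

lemma inv_sub_inv_abs_le {a b c L : ℝ} (hc : 0 < c) (ha : c ≤ a) (hb : c ≤ b)
    (h : |a - b| ≤ L) : |a⁻¹ - b⁻¹| ≤ c⁻¹ * c⁻¹ * L := by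
  have ha0 : 0 < a := lt_of_lt_of_le hc ha
  have hb0 : 0 < b := lt_of_lt_of_le hc hb
  have hiden : a⁻¹ - b⁻¹ = (b - a) * (a⁻¹ * b⁻¹) := by field_simp
  rw [hiden, abs_mul, abs_sub_comm]
  have h1 : |a⁻¹ * b⁻¹| ≤ c⁻¹ * c⁻¹ := by
    rw [abs_mul, abs_of_pos (inv_pos.mpr ha0), abs_of_pos (inv_pos.mpr hb0)]
    exact mul_le_mul (inv_anti₀ hc ha) (inv_anti₀ hc hb)
      (by positivity) (by positivity)
  calc |a - b| * |a⁻¹ * b⁻¹| ≤ L * (c⁻¹ * c⁻¹) :=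
        mul_le_mul h h1 (abs_nonneg _) ((abs_nonneg _).trans h)
    _ = c⁻¹ * c⁻¹ * L := by ring

/-- Weighted `L∞_q` bound for the local Maxwellian and its `(x,v)`-gradient:
if a `C¹` function `f ≥ 0` on `𝕋³ × ℝ³` satisfies
`‖f‖_{L∞_q} + ‖∇_{x,v}f‖_{L∞_q} < C₁`, `ρ_f + |U_f| + T_f < C₂` and `ρ_f, T_f > C₃`,
then `‖𝓜(f)‖_{L∞_q} + ‖∇_{x,v}𝓜(f)‖_{L∞_q} ≤ C (‖f‖_{L∞_q} + ‖∇_{x,v}f‖_{L∞_q})`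
with `C` depending only on `q, C₁, C₂, C₃`. -/
theorem stmt_2 (q C₁ C₂ C₃ : ℝ) (hq : 5 < q) (hC₁ : 0 < C₁) (hC₂ : 0 < C₂) (hC₃ : 0 < C₃) :
    ∃ C : ℝ, 0 < C ∧
      ∀ f : E3 × E3 → ℝ, ContDiff ℝ 1 f → (∀ p, 0 ≤ f p) →
        (∀ (x v : E3) (k : Fin 3 → ℤ), f (x + intVec k, v) = f (x, v)) →
        wnormX q f + wnormX q (fun p => ‖fderiv ℝ f p‖) < ENNReal.ofReal C₁ →
        (∀ x : E3, densX f x + ‖bulkX f x‖ + tempX f x < C₂) →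
        (∀ x : E3, C₃ < densX f x ∧ C₃ < tempX f x) →
        wnormX q (maxwX f) + wnormX q (fun p => ‖fderiv ℝ (maxwX f) p‖) ≤
          ENNReal.ofReal C * (wnormX q f + wnormX q (fun p => ‖fderiv ℝ f p‖)) := by
  have hπ := Real.pi_pos
  have hq0 : (0:ℝ) < q := by linarith
  obtain ⟨J, hJdef⟩ : ∃ x : ℝ, x = ∫ v : E3, (1 + ‖v‖) ^ 2 * (1 + ‖v‖ ^ q)⁻¹ := ⟨_, rfl⟩
  have hJpos : 0 < J := by
    rw [hJdef]
    rw [integral_pos_iff_support_of_nonneg_ae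
      (ae_of_all _ fun v => by simp only [Pi.zero_apply]; positivity) (integrable_dom hq)]
    have hsupp : (Function.support fun v : E3 => (1 + ‖v‖) ^ 2 * (1 + ‖v‖ ^ q)⁻¹) =
        Set.univ := by
      ext v
      simp only [Function.mem_support, Set.mem_univ, iff_true]
      positivity
    rw [hsupp]
    exact isOpen_univ.measure_pos volume ⟨0, trivial⟩
  obtain ⟨gmax, hgmaxdef⟩ : ∃ x : ℝ, x = (2 * π * C₃) ^ (-(3:ℝ)/2) := ⟨_, rfl⟩
  have hgmaxpos : 0 < gmax := by rw [hgmaxdef]; positivity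
  obtain ⟨Lg, hLgdef⟩ : ∃ x : ℝ, x = 2 * π * (3/2) * (2 * π * C₃) ^ (-(3:ℝ)/2 - 1) := ⟨_, rfl⟩
  have hLgpos : 0 < Lg := by
    rw [hLgdef]
    positivity
  obtain ⟨EK, hEKdef⟩ : ∃ x : ℝ, x = Real.exp (C₂ ^ 2 / (2 * C₃)) := ⟨_, rfl⟩
  have hEKpos : 0 < EK := hEKdef ▸ Real.exp_pos _
  obtain ⟨EKK, hEKKdef⟩ : ∃ x : ℝ, x = EK * Real.exp (1 / (4 * C₂)) := ⟨_, rfl⟩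
  have hEKKpos : 0 < EKK := by rw [hEKKdef]; exact mul_pos hEKpos (Real.exp_pos _)
  obtain ⟨Lρ, hLρdef⟩ : ∃ x : ℝ, x = C₁ * J := ⟨_, rfl⟩
  have hLρpos : 0 < Lρ := by rw [hLρdef]; exact mul_pos hC₁ hJpos
  obtain ⟨LU, hLUdef⟩ : ∃ x : ℝ, x = C₃⁻¹ * Lρ + C₃⁻¹ * C₃⁻¹ * C₂ ^ 2 * Lρ := ⟨_, rfl⟩
  have hLUpos : 0 < LU := by
    rw [hLUdef]
    have h1 : 0 < C₃⁻¹ * Lρ := mul_pos (inv_pos.mpr hC₃) hLρpos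
    have h2 : 0 ≤ C₃⁻¹ * C₃⁻¹ * C₂ ^ 2 * Lρ := by positivity
    linarith
  obtain ⟨BI, hBIdef⟩ : ∃ x : ℝ, x = (1 + C₂) ^ 2 * Lρ := ⟨_, rfl⟩
  have hBIpos : 0 < BI := by
    rw [hBIdef]
    have : (0:ℝ) < (1 + C₂) ^ 2 := by positivity
    exact mul_pos this hLρpos
  obtain ⟨LI, hLIdef⟩ : ∃ x : ℝ, x = (1 + C₂) ^ 2 * Lρ + 2 * (1 + C₂) * LU * Lρ := ⟨_, rfl⟩
  have hLIpos : 0 < LI := by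
    rw [hLIdef]
    have h1 : (0:ℝ) < (1 + C₂) ^ 2 * Lρ := mul_pos (by positivity) hLρpos
    have h2 : (0:ℝ) ≤ 2 * (1 + C₂) * LU * Lρ := by
      apply mul_nonneg (mul_nonneg (by positivity) hLUpos.le) hLρpos.le
    linarith
  obtain ⟨LT, hLTdef⟩ : ∃ x : ℝ, x = (3 * C₃)⁻¹ * LI + (3 * C₃)⁻¹ * (3 * C₃)⁻¹ * (3 * Lρ) * BI := ⟨_, rfl⟩
  have hLTpos : 0 < LT := by
    rw [hLTdef]
    have h1 : (0:ℝ) < (3 * C₃)⁻¹ * LI := mul_pos (by positivity) hLIpos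
    have h2 : (0:ℝ) ≤ (3 * C₃)⁻¹ * (3 * C₃)⁻¹ * (3 * Lρ) * BI := by
      apply mul_nonneg (mul_nonneg (mul_nonneg (by positivity) (by positivity)) (by linarith)) hBIpos.le
    linarith
  obtain ⟨A0, hA0def⟩ : ∃ x : ℝ, x = Lρ * gmax + C₂ * (Lg * LT) := ⟨_, rfl⟩
  have hA0pos : 0 < A0 := by
    rw [hA0def]
    have h1 : 0 < Lρ * gmax := mul_pos hLρpos hgmaxpos
    have h2 : 0 ≤ C₂ * (Lg * LT) := mul_nonneg hC₂.le (mul_nonneg hLgpos.le hLTpos.le)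
    linarith
  obtain ⟨QA, hQAdef⟩ : ∃ x : ℝ → ℝ, x = fun r =>
    (2 * C₃)⁻¹ * (2 * (r + 1 + C₂) * (1 + LU)) +
      (r + 1 + C₂) ^ 2 * ((2 * C₃)⁻¹ * (2 * C₃)⁻¹ * (2 * LT)) := ⟨_, rfl⟩
  have hQAnn : ∀ r : ℝ, 0 ≤ r → 0 ≤ QA r := by
    intro r hr
    rw [congrFun hQAdef r]
    have h1 : (0:ℝ) ≤ (2 * C₃)⁻¹ * (2 * (r + 1 + C₂) * (1 + LU)) := by
      apply mul_nonneg (by positivity)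
      apply mul_nonneg (by nlinarith only [hr, hC₂]) (by nlinarith only [hLUpos])
    have h2 : (0:ℝ) ≤ (r + 1 + C₂) ^ 2 * ((2 * C₃)⁻¹ * (2 * C₃)⁻¹ * (2 * LT)) := by
      apply mul_nonneg (sq_nonneg _)
      apply mul_nonneg (mul_nonneg (by positivity) (by positivity)) (by linarith)
    linarith
  obtain ⟨Q2, hQ2def⟩ : ∃ x : ℝ, x = (2 * C₃)⁻¹ * 2 * (1 + C₂) * (1 + LU) +
      (1 + C₂) ^ 2 * ((2 * C₃)⁻¹ * (2 * C₃)⁻¹ * (2 * LT)) := ⟨_, rfl⟩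
  have hQ2nn : 0 ≤ Q2 := by
    rw [hQ2def]
    have h1 : (0:ℝ) ≤ (2 * C₃)⁻¹ * 2 * (1 + C₂) * (1 + LU) := by
      apply mul_nonneg (mul_nonneg (by positivity) (by linarith)) (by nlinarith only [hLUpos])
    have h2 : (0:ℝ) ≤ (1 + C₂) ^ 2 * ((2 * C₃)⁻¹ * (2 * C₃)⁻¹ * (2 * LT)) := by
      apply mul_nonneg (sq_nonneg _)
      apply mul_nonneg (mul_nonneg (by positivity) (by positivity)) (by linarith)
    linarith
  obtain ⟨Kq1, hKq1def⟩ : ∃ x : ℝ, x = 1 + Real.exp (q ^ 2 / (2 * (4 * C₂)⁻¹)) := ⟨_, rfl⟩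
  have hKq1pos : 0 < Kq1 := by
    have := Real.exp_pos (q ^ 2 / (2 * (4 * C₂)⁻¹)); rw [hKq1def]; linarith
  obtain ⟨K22, hK22def⟩ : ∃ x : ℝ, x = 1 + Real.exp ((2:ℝ) ^ 2 / (2 * (16 * C₂)⁻¹)) := ⟨_, rfl⟩
  have hK22pos : 0 < K22 := by
    have := Real.exp_pos ((2:ℝ) ^ 2 / (2 * (16 * C₂)⁻¹)); rw [hK22def]; linarith
  obtain ⟨Kq2, hKq2def⟩ : ∃ x : ℝ, x = 1 + Real.exp (q ^ 2 / (2 * (16 * C₂)⁻¹)) := ⟨_, rfl⟩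
  have hKq2pos : 0 < Kq2 := by
    have := Real.exp_pos (q ^ 2 / (2 * (16 * C₂)⁻¹)); rw [hKq2def]; linarith
  obtain ⟨M1, hM1def⟩ : ∃ x : ℝ, x = C₂ * gmax * EK * Kq1 := ⟨_, rfl⟩
  have hM1pos : 0 < M1 := by
    rw [hM1def]
    apply mul_pos (mul_pos (mul_pos hC₂ hgmaxpos) hEKpos) hKq1pos
  obtain ⟨M2, hM2def⟩ : ∃ x : ℝ, x = EKK * (A0 + C₂ * gmax * Q2) * (2 * (K22 * Kq2)) := ⟨_, rfl⟩
  have hM2pos : 0 < M2 := by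
    rw [hM2def]
    apply mul_pos (mul_pos hEKKpos ?_) (by positivity)
    have : 0 ≤ C₂ * gmax * Q2 := mul_nonneg (mul_nonneg hC₂.le hgmaxpos.le) hQ2nn
    linarith
  obtain ⟨Cfin, hCfindef⟩ : ∃ x : ℝ, x = (M1 + M2) * J / C₃ + 1 := ⟨_, rfl⟩
  have hCfinpos : 0 < Cfin := by
    have h1 : 0 ≤ (M1 + M2) * J / C₃ := by
      apply div_nonneg (mul_nonneg (by linarith) hJpos.le) hC₃.le
    rw [hCfindef]; linarith
  refine ⟨Cfin, hCfinpos, ?_⟩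
  intro f hf hf0 hper hnorm hupper hlower
  -- basic facts about f
  have hfc : Continuous f := hf.continuous
  have hdfc : Continuous fun p : E3 × E3 => fderiv ℝ f p := hf.continuous_fderiv (by norm_num)
  have hwf : wnormX q f ≤ ENNReal.ofReal C₁ := le_self_add.trans hnorm.le
  have hwdf : wnormX q (fun p => ‖fderiv ℝ f p‖) ≤ ENNReal.ofReal C₁ :=
    le_add_self.trans hnorm.le
  have hfb : ∀ p : E3 × E3, (1 + ‖p.2‖ ^ q) * |f p| ≤ C₁ :=
    forall_of_wnorm hq0 hfc hC₁.le hwf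
  have hdfb : ∀ p : E3 × E3, (1 + ‖p.2‖ ^ q) * ‖fderiv ℝ f p‖ ≤ C₁ := by
    intro p
    have := forall_of_wnorm hq0 hdfc.norm hC₁.le hwdf p
    rwa [abs_norm] at this
  have hwpos : ∀ v : E3, (0:ℝ) < 1 + ‖v‖ ^ q := by
    intro v; positivity
  have hfb' : ∀ p : E3 × E3, f p ≤ C₁ * (1 + ‖p.2‖ ^ q)⁻¹ := by
    intro p
    rw [le_mul_inv_iff₀ (hwpos p.2)]
    calc f p * (1 + ‖p.2‖ ^ q) ≤ |f p| * (1 + ‖p.2‖ ^ q) :=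
          mul_le_mul_of_nonneg_right (le_abs_self _) (hwpos p.2).le
      _ = (1 + ‖p.2‖ ^ q) * |f p| := mul_comm _ _
      _ ≤ C₁ := hfb p
  have hdfb' : ∀ p : E3 × E3, ‖fderiv ℝ f p‖ ≤ C₁ * (1 + ‖p.2‖ ^ q)⁻¹ := by
    intro p
    rw [le_mul_inv_iff₀ (hwpos p.2)]
    calc ‖fderiv ℝ f p‖ * (1 + ‖p.2‖ ^ q) = (1 + ‖p.2‖ ^ q) * ‖fderiv ℝ f p‖ := mul_comm _ _
      _ ≤ C₁ := hdfb p
  -- Lipschitz property of f in x for fixed v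
  have hLipf : ∀ (v x y : E3), |f (x, v) - f (y, v)| ≤ C₁ * (1 + ‖v‖ ^ q)⁻¹ * ‖x - y‖ := by
    intro v x y
    have hconv : Convex ℝ ((Set.univ : Set E3) ×ˢ ({v} : Set E3)) :=
      convex_univ.prod (convex_singleton v)
    have hdiffAt : ∀ p ∈ (Set.univ : Set E3) ×ˢ ({v} : Set E3), DifferentiableAt ℝ f p :=
      fun p _ => (hf.differentiable (by norm_num)).differentiableAt
    have hbd : ∀ p ∈ (Set.univ : Set E3) ×ˢ ({v} : Set E3),
        ‖fderiv ℝ f p‖ ≤ C₁ * (1 + ‖v‖ ^ q)⁻¹ := by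
      intro p hp
      have h2 : p.2 = v := hp.2
      have h3 := hdfb' p
      rwa [h2] at h3
    have key := hconv.norm_image_sub_le_of_norm_fderiv_le hdiffAt hbd
      (Set.mk_mem_prod (Set.mem_univ y) rfl) (Set.mk_mem_prod (Set.mem_univ x) rfl)
    rw [Real.norm_eq_abs] at key
    have hnorm_eq : ‖((x, v) : E3 × E3) - (y, v)‖ = ‖x - y‖ := by
      have h4 : ((x, v) : E3 × E3) - (y, v) = (x - y, 0) := by
        rw [Prod.mk_sub_mk, sub_self]
      rw [h4, Prod.norm_def]
      simp only [norm_zero]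
      exact max_eq_left (norm_nonneg (x - y))
    rwa [hnorm_eq] at key
  -- macroscopic bounds
  have hρnn : ∀ x, 0 ≤ densX f x := fun x => integral_nonneg fun v => hf0 _
  have hTnn : ∀ x, 0 ≤ tempX f x := by
    intro x
    apply mul_nonneg (inv_nonneg.mpr (by nlinarith only [(hlower x).1, hρnn x, hC₃]))
    exact integral_nonneg fun v => mul_nonneg (by positivity) (hf0 _)
  have hρub : ∀ x, densX f x < C₂ := by
    intro x; have := hupper x; have := norm_nonneg (bulkX f x); have := hTnn x; linarith
  have hUub : ∀ x, ‖bulkX f x‖ < C₂ := by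
    intro x; have := hupper x; have := hρnn x; have := hTnn x; linarith
  have hTub : ∀ x, tempX f x < C₂ := by
    intro x; have := hupper x; have := hρnn x; have := norm_nonneg (bulkX f x); linarith
  have hρlb : ∀ x, C₃ < densX f x := fun x => (hlower x).1
  have hTlb : ∀ x, C₃ < tempX f x := fun x => (hlower x).2
  -- integrability
  have hone : ∀ v : E3, (1:ℝ) ≤ (1 + ‖v‖) ^ 2 := by
    intro v; nlinarith only [norm_nonneg v]
  have hvle : ∀ v : E3, ‖v‖ ≤ (1 + ‖v‖) ^ 2 := by
    intro v; nlinarith only [norm_nonneg v]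
  have hwinv_pos : ∀ v : E3, (0:ℝ) < (1 + ‖v‖ ^ q)⁻¹ := fun v => inv_pos.mpr (hwpos v)
  have hint0 : ∀ x, Integrable (fun v => f (x, v)) := by
    intro x
    apply integrable_of_dom hq
      ((hfc.comp (Continuous.prodMk_right x)).aestronglyMeasurable) (K := C₁)
    intro v
    show ‖f (x, v)‖ ≤ _
    rw [Real.norm_eq_abs, abs_of_nonneg (hf0 _)]
    calc f (x, v) ≤ C₁ * (1 + ‖v‖ ^ q)⁻¹ := hfb' (x, v)
      _ ≤ C₁ * ((1 + ‖v‖) ^ 2 * (1 + ‖v‖ ^ q)⁻¹) := by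
          apply mul_le_mul_of_nonneg_left _ hC₁.le
          nlinarith only [hwinv_pos v, hone v]
  have hint1 : ∀ x, Integrable (fun v => f (x, v) • v) := by
    intro x
    apply integrable_of_dom hq
      ((hfc.comp (Continuous.prodMk_right x)).smul continuous_id).aestronglyMeasurable (K := C₁)
    intro v
    show ‖f (x, v) • v‖ ≤ _
    rw [norm_smul, Real.norm_eq_abs, abs_of_nonneg (hf0 _)]
    calc f (x, v) * ‖v‖ ≤ (C₁ * (1 + ‖v‖ ^ q)⁻¹) * ‖v‖ := by
          apply mul_le_mul_of_nonneg_right (hfb' (x, v)) (norm_nonneg v)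
      _ ≤ C₁ * ((1 + ‖v‖) ^ 2 * (1 + ‖v‖ ^ q)⁻¹) := by
          have ha : (0:ℝ) ≤ C₁ * (1 + ‖v‖ ^ q)⁻¹ := mul_nonneg hC₁.le (hwinv_pos v).le
          have hb2 : (0:ℝ) ≤ (1 + ‖v‖) ^ 2 - ‖v‖ := by nlinarith only [hvle v]
          nlinarith only [mul_nonneg ha hb2]
  have hC32 : C₃ < C₂ := lt_trans (hρlb 0) (hρub 0)
  have hAle : ∀ (x v : E3), ‖v - bulkX f x‖ ≤ (1 + C₂) * (1 + ‖v‖) := by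
    intro x v
    have h1 := norm_sub_le v (bulkX f x)
    have h2 := (hUub x).le
    have h3 := norm_nonneg v
    nlinarith only [mul_nonneg hC₂.le (norm_nonneg v), h1, h2, h3]
  have hIptb : ∀ (x v : E3), ‖v - bulkX f x‖ ^ 2 * f (x, v) ≤
      ((1 + C₂) ^ 2 * C₁) * ((1 + ‖v‖) ^ 2 * (1 + ‖v‖ ^ q)⁻¹) := by
    intro x v
    have hb1 := hAle x v
    have hb2 : ‖v - bulkX f x‖ ^ 2 ≤ (1 + C₂) ^ 2 * (1 + ‖v‖) ^ 2 := by
      nlinarith only [norm_nonneg (v - bulkX f x), hb1]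
    calc ‖v - bulkX f x‖ ^ 2 * f (x, v)
        ≤ ((1 + C₂) ^ 2 * (1 + ‖v‖) ^ 2) * (C₁ * (1 + ‖v‖ ^ q)⁻¹) :=
          mul_le_mul hb2 (hfb' (x, v)) (hf0 _) (by positivity)
      _ = (1 + C₂) ^ 2 * C₁ * ((1 + ‖v‖) ^ 2 * (1 + ‖v‖ ^ q)⁻¹) := by ring
  have hint2 : ∀ x, Integrable (fun v => ‖v - bulkX f x‖ ^ 2 * f (x, v)) := by
    intro x
    apply integrable_of_dom hq
      ((((continuous_id.sub continuous_const).norm.pow 2).mul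
        (hfc.comp (Continuous.prodMk_right x)))).aestronglyMeasurable (K := (1 + C₂) ^ 2 * C₁)
    intro v
    show ‖‖v - bulkX f x‖ ^ 2 * f (x, v)‖ ≤ _
    rw [Real.norm_eq_abs, abs_of_nonneg (mul_nonneg (by positivity) (hf0 _))]
    exact hIptb x v
  -- Lipschitz bounds for the macroscopic fields
  have hρLip : ∀ x y, |densX f x - densX f y| ≤ Lρ * ‖x - y‖ := by
    intro x y
    have hsub : densX f x - densX f y = ∫ v, (f (x, v) - f (y, v)) :=
      (integral_sub (hint0 x) (hint0 y)).symm
    rw [hsub, ← Real.norm_eq_abs]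
    have hb : ∀ v : E3, ‖f (x, v) - f (y, v)‖ ≤
        (C₁ * ‖x - y‖) * ((1 + ‖v‖) ^ 2 * (1 + ‖v‖ ^ q)⁻¹) := by
      intro v
      rw [Real.norm_eq_abs]
      calc |f (x, v) - f (y, v)| ≤ C₁ * (1 + ‖v‖ ^ q)⁻¹ * ‖x - y‖ := hLipf v x y
        _ ≤ C₁ * ‖x - y‖ * ((1 + ‖v‖) ^ 2 * (1 + ‖v‖ ^ q)⁻¹) := by
            have ha : (0:ℝ) ≤ C₁ * (1 + ‖v‖ ^ q)⁻¹ * ‖x - y‖ :=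
              mul_nonneg (mul_nonneg hC₁.le (hwinv_pos v).le) (norm_nonneg _)
            have hb2 : (0:ℝ) ≤ (1 + ‖v‖) ^ 2 - 1 := by nlinarith only [hone v]
            nlinarith only [mul_nonneg ha hb2]
    calc ‖∫ v, (f (x, v) - f (y, v))‖
        ≤ ∫ v, (C₁ * ‖x - y‖) * ((1 + ‖v‖) ^ 2 * (1 + ‖v‖ ^ q)⁻¹) :=
          norm_integral_le_of_norm_le ((integrable_dom hq).const_mul _) (ae_of_all _ hb)
      _ = Lρ * ‖x - y‖ := by
          rw [integral_const_mul, ← hJdef, hLρdef]; ring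
  have hm1b : ∀ x, ‖∫ v, f (x, v) • v‖ ≤ C₂ ^ 2 := by
    intro x
    have hρpos : 0 < densX f x := lt_trans hC₃ (hρlb x)
    have hm1eq : (∫ v, f (x, v) • v) = densX f x • bulkX f x := by
      rw [show bulkX f x = (densX f x)⁻¹ • ∫ v, f (x, v) • v from rfl, smul_smul,
        mul_inv_cancel₀ hρpos.ne', one_smul]
    rw [hm1eq, norm_smul, Real.norm_eq_abs, abs_of_pos hρpos]
    nlinarith only [hρub x, hUub x, norm_nonneg (bulkX f x), hρpos]
  have hm1Lip : ∀ x y, ‖(∫ v, f (x, v) • v) - ∫ v, f (y, v) • v‖ ≤ Lρ * ‖x - y‖ := by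
    intro x y
    rw [← integral_sub (hint1 x) (hint1 y)]
    have hb : ∀ v : E3, ‖f (x, v) • v - f (y, v) • v‖ ≤
        (C₁ * ‖x - y‖) * ((1 + ‖v‖) ^ 2 * (1 + ‖v‖ ^ q)⁻¹) := by
      intro v
      rw [← sub_smul, norm_smul, Real.norm_eq_abs]
      calc |f (x, v) - f (y, v)| * ‖v‖ ≤ (C₁ * (1 + ‖v‖ ^ q)⁻¹ * ‖x - y‖) * ‖v‖ :=
            mul_le_mul_of_nonneg_right (hLipf v x y) (norm_nonneg v)
        _ ≤ (C₁ * ‖x - y‖) * ((1 + ‖v‖) ^ 2 * (1 + ‖v‖ ^ q)⁻¹) := by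
            have ha : (0:ℝ) ≤ C₁ * (1 + ‖v‖ ^ q)⁻¹ * ‖x - y‖ :=
              mul_nonneg (mul_nonneg hC₁.le (hwinv_pos v).le) (norm_nonneg _)
            have hb2 : (0:ℝ) ≤ (1 + ‖v‖) ^ 2 - ‖v‖ := by nlinarith only [hvle v]
            nlinarith only [mul_nonneg ha hb2]
    calc ‖∫ v, (f (x, v) • v - f (y, v) • v)‖
        ≤ ∫ v, (C₁ * ‖x - y‖) * ((1 + ‖v‖) ^ 2 * (1 + ‖v‖ ^ q)⁻¹) :=
          norm_integral_le_of_norm_le ((integrable_dom hq).const_mul _) (ae_of_all _ hb)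
      _ = Lρ * ‖x - y‖ := by
          rw [integral_const_mul, ← hJdef, hLρdef]; ring
  have hULip : ∀ x y, ‖bulkX f x - bulkX f y‖ ≤ LU * ‖x - y‖ := by
    intro x y
    have hρx : 0 < densX f x := lt_trans hC₃ (hρlb x)
    have hρy : 0 < densX f y := lt_trans hC₃ (hρlb y)
    have hdecomp : bulkX f x - bulkX f y =
        (densX f x)⁻¹ • ((∫ v, f (x, v) • v) - ∫ v, f (y, v) • v) +
          ((densX f x)⁻¹ - (densX f y)⁻¹) • (∫ v, f (y, v) • v) := by
      show (densX f x)⁻¹ • (∫ v, f (x, v) • v) - (densX f y)⁻¹ • (∫ v, f (y, v) • v) = _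
      rw [smul_sub, sub_smul]
      abel
    rw [hdecomp]
    have h1 : ‖(densX f x)⁻¹ • ((∫ v, f (x, v) • v) - ∫ v, f (y, v) • v)‖ ≤
        C₃⁻¹ * (Lρ * ‖x - y‖) := by
      rw [norm_smul, Real.norm_eq_abs, abs_of_pos (inv_pos.mpr hρx)]
      exact mul_le_mul (inv_anti₀ hC₃ (hρlb x).le) (hm1Lip x y) (norm_nonneg _)
        (inv_pos.mpr hC₃).le
    have h2 : ‖((densX f x)⁻¹ - (densX f y)⁻¹) • (∫ v, f (y, v) • v)‖ ≤
        (C₃⁻¹ * C₃⁻¹ * (Lρ * ‖x - y‖)) * C₂ ^ 2 := by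
      rw [norm_smul, Real.norm_eq_abs]
      apply mul_le_mul (inv_sub_inv_abs_le hC₃ (hρlb x).le (hρlb y).le (hρLip x y)) (hm1b y)
        (norm_nonneg _)
      apply mul_nonneg (mul_nonneg (inv_pos.mpr hC₃).le (inv_pos.mpr hC₃).le)
      exact mul_nonneg hLρpos.le (norm_nonneg _)
    calc ‖_ + _‖ ≤ _ + _ := norm_add_le _ _
      _ ≤ C₃⁻¹ * (Lρ * ‖x - y‖) + (C₃⁻¹ * C₃⁻¹ * (Lρ * ‖x - y‖)) * C₂ ^ 2 := add_le_add h1 h2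
      _ = LU * ‖x - y‖ := by rw [hLUdef]; ring
  have hIb : ∀ x, (∫ v, ‖v - bulkX f x‖ ^ 2 * f (x, v)) ≤ BI := by
    intro x
    calc (∫ v, ‖v - bulkX f x‖ ^ 2 * f (x, v))
        ≤ ∫ v, ((1 + C₂) ^ 2 * C₁) * ((1 + ‖v‖) ^ 2 * (1 + ‖v‖ ^ q)⁻¹) :=
          integral_mono (hint2 x) ((integrable_dom hq).const_mul _) (fun v => hIptb x v)
      _ = BI := by rw [integral_const_mul, ← hJdef, hBIdef, hLρdef]; ring
  have hInn : ∀ x, 0 ≤ ∫ v, ‖v - bulkX f x‖ ^ 2 * f (x, v) :=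
    fun x => integral_nonneg fun v => mul_nonneg (by positivity) (hf0 _)
  have hILip : ∀ x y, |(∫ v, ‖v - bulkX f x‖ ^ 2 * f (x, v)) -
      ∫ v, ‖v - bulkX f y‖ ^ 2 * f (y, v)| ≤ LI * ‖x - y‖ := by
    intro x y
    rw [← Real.norm_eq_abs, ← integral_sub (hint2 x) (hint2 y)]
    have hb : ∀ v : E3, ‖‖v - bulkX f x‖ ^ 2 * f (x, v) - ‖v - bulkX f y‖ ^ 2 * f (y, v)‖ ≤
        (((1 + C₂) ^ 2 * C₁ + 2 * (1 + C₂) * LU * C₁) * ‖x - y‖) *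
          ((1 + ‖v‖) ^ 2 * (1 + ‖v‖ ^ q)⁻¹) := by
      intro v
      have hA := hAle x v
      have hB := hAle y v
      have hFy := hfb' (y, v)
      have hFd := hLipf v x y
      have hABd : |‖v - bulkX f x‖ - ‖v - bulkX f y‖| ≤ LU * ‖x - y‖ := by
        calc |‖v - bulkX f x‖ - ‖v - bulkX f y‖| ≤ ‖(v - bulkX f x) - (v - bulkX f y)‖ :=
              abs_norm_sub_norm_le _ _
          _ = ‖bulkX f x - bulkX f y‖ := by
              rw [show (v - bulkX f x) - (v - bulkX f y) = bulkX f y - bulkX f x by abel,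
                norm_sub_rev]
          _ ≤ LU * ‖x - y‖ := hULip x y
      have hsplit : ‖v - bulkX f x‖ ^ 2 * f (x, v) - ‖v - bulkX f y‖ ^ 2 * f (y, v) =
          ‖v - bulkX f x‖ ^ 2 * (f (x, v) - f (y, v)) +
            (‖v - bulkX f x‖ ^ 2 - ‖v - bulkX f y‖ ^ 2) * f (y, v) := by ring
      rw [Real.norm_eq_abs, hsplit]
      have hterm1 : |‖v - bulkX f x‖ ^ 2 * (f (x, v) - f (y, v))| ≤
          ((1 + C₂) ^ 2 * (1 + ‖v‖) ^ 2) * (C₁ * (1 + ‖v‖ ^ q)⁻¹ * ‖x - y‖) := by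
        rw [abs_mul, abs_of_nonneg (sq_nonneg ‖v - bulkX f x‖)]
        apply mul_le_mul _ hFd (abs_nonneg _) (by positivity)
        nlinarith only [norm_nonneg (v - bulkX f x), hA]
      have hterm2 : |(‖v - bulkX f x‖ ^ 2 - ‖v - bulkX f y‖ ^ 2) * f (y, v)| ≤
          ((LU * ‖x - y‖) * (2 * (1 + C₂) * (1 + ‖v‖))) * (C₁ * (1 + ‖v‖ ^ q)⁻¹) := by
        rw [abs_mul, abs_of_nonneg (hf0 _)]
        apply mul_le_mul _ hFy (hf0 _) ?hnn
        case hnn =>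
          apply mul_nonneg (mul_nonneg hLUpos.le (norm_nonneg _))
          nlinarith only [norm_nonneg v, hC₂]
        calc |‖v - bulkX f x‖ ^ 2 - ‖v - bulkX f y‖ ^ 2|
            = |‖v - bulkX f x‖ - ‖v - bulkX f y‖| * (‖v - bulkX f x‖ + ‖v - bulkX f y‖) := by
              rw [show ‖v - bulkX f x‖ ^ 2 - ‖v - bulkX f y‖ ^ 2 =
                (‖v - bulkX f x‖ - ‖v - bulkX f y‖) * (‖v - bulkX f x‖ + ‖v - bulkX f y‖) by ring,
                abs_mul, abs_of_nonneg (by positivity : (0:ℝ) ≤ ‖v - bulkX f x‖ + ‖v - bulkX f y‖)]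
          _ ≤ (LU * ‖x - y‖) * (2 * (1 + C₂) * (1 + ‖v‖)) := by
              apply mul_le_mul hABd _ (by positivity) (mul_nonneg hLUpos.le (norm_nonneg _))
              nlinarith only [hA, hB, norm_nonneg v]
      calc |‖v - bulkX f x‖ ^ 2 * (f (x, v) - f (y, v)) +
            (‖v - bulkX f x‖ ^ 2 - ‖v - bulkX f y‖ ^ 2) * f (y, v)|
          ≤ |‖v - bulkX f x‖ ^ 2 * (f (x, v) - f (y, v))| +
            |(‖v - bulkX f x‖ ^ 2 - ‖v - bulkX f y‖ ^ 2) * f (y, v)| := abs_add_le _ _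
        _ ≤ ((1 + C₂) ^ 2 * (1 + ‖v‖) ^ 2) * (C₁ * (1 + ‖v‖ ^ q)⁻¹ * ‖x - y‖) +
            ((LU * ‖x - y‖) * (2 * (1 + C₂) * (1 + ‖v‖))) * (C₁ * (1 + ‖v‖ ^ q)⁻¹) :=
            add_le_add hterm1 hterm2
        _ ≤ (((1 + C₂) ^ 2 * C₁ + 2 * (1 + C₂) * LU * C₁) * ‖x - y‖) *
            ((1 + ‖v‖) ^ 2 * (1 + ‖v‖ ^ q)⁻¹) := by
            have h1 : (0:ℝ) ≤ LU * ‖x - y‖ * (2 * (1 + C₂)) * (C₁ * (1 + ‖v‖ ^ q)⁻¹) := by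
              apply mul_nonneg (mul_nonneg (mul_nonneg hLUpos.le (norm_nonneg _)) (by linarith))
              exact mul_nonneg hC₁.le (hwinv_pos v).le
            have h2 : (0:ℝ) ≤ (LU * ‖x - y‖ * (2 * (1 + C₂)) * (C₁ * (1 + ‖v‖ ^ q)⁻¹)) *
                ((1 + ‖v‖) * ‖v‖) :=
              mul_nonneg h1 (mul_nonneg (by linarith [norm_nonneg v]) (norm_nonneg v))
            nlinarith only [h2]
    calc ‖∫ v, (‖v - bulkX f x‖ ^ 2 * f (x, v) - ‖v - bulkX f y‖ ^ 2 * f (y, v))‖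
        ≤ ∫ v, (((1 + C₂) ^ 2 * C₁ + 2 * (1 + C₂) * LU * C₁) * ‖x - y‖) *
            ((1 + ‖v‖) ^ 2 * (1 + ‖v‖ ^ q)⁻¹) :=
          norm_integral_le_of_norm_le ((integrable_dom hq).const_mul _) (ae_of_all _ hb)
      _ = LI * ‖x - y‖ := by
          rw [integral_const_mul, ← hJdef, hLIdef, hLρdef]; ring
  have hTLip : ∀ x y, |tempX f x - tempX f y| ≤ LT * ‖x - y‖ := by
    intro x y
    have hρx : 0 < densX f x := lt_trans hC₃ (hρlb x)
    have hρy : 0 < densX f y := lt_trans hC₃ (hρlb y)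
    have h3x : (3:ℝ) * C₃ ≤ 3 * densX f x := by linarith [hρlb x]
    have h3y : (3:ℝ) * C₃ ≤ 3 * densX f y := by linarith [hρlb y]
    have h3C : (0:ℝ) < 3 * C₃ := by linarith
    have hdecomp : tempX f x - tempX f y =
        (3 * densX f x)⁻¹ * ((∫ v, ‖v - bulkX f x‖ ^ 2 * f (x, v)) -
            ∫ v, ‖v - bulkX f y‖ ^ 2 * f (y, v)) +
          ((3 * densX f x)⁻¹ - (3 * densX f y)⁻¹) * (∫ v, ‖v - bulkX f y‖ ^ 2 * f (y, v)) := by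
      show (3 * densX f x)⁻¹ * _ - (3 * densX f y)⁻¹ * _ = _
      ring
    rw [hdecomp]
    have h1 : |(3 * densX f x)⁻¹ * ((∫ v, ‖v - bulkX f x‖ ^ 2 * f (x, v)) -
        ∫ v, ‖v - bulkX f y‖ ^ 2 * f (y, v))| ≤ (3 * C₃)⁻¹ * (LI * ‖x - y‖) := by
      rw [abs_mul, abs_of_pos (inv_pos.mpr (by linarith : (0:ℝ) < 3 * densX f x))]
      exact mul_le_mul (inv_anti₀ h3C h3x) (hILip x y) (abs_nonneg _)
        (inv_pos.mpr h3C).le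
    have h2 : |((3 * densX f x)⁻¹ - (3 * densX f y)⁻¹) *
        (∫ v, ‖v - bulkX f y‖ ^ 2 * f (y, v))| ≤
        ((3 * C₃)⁻¹ * (3 * C₃)⁻¹ * (3 * (Lρ * ‖x - y‖))) * BI := by
      rw [abs_mul]
      have habs3 : |3 * densX f x - 3 * densX f y| ≤ 3 * (Lρ * ‖x - y‖) := by
        rw [show 3 * densX f x - 3 * densX f y = 3 * (densX f x - densX f y) by ring, abs_mul]
        rw [show |(3:ℝ)| = 3 by norm_num]
        linarith [hρLip x y]
      apply mul_le_mul (inv_sub_inv_abs_le h3C h3x h3y habs3) _ (abs_nonneg _)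
      · apply mul_nonneg (mul_nonneg (inv_pos.mpr h3C).le (inv_pos.mpr h3C).le)
        apply mul_nonneg (by norm_num) (mul_nonneg hLρpos.le (norm_nonneg _))
      · rw [abs_of_nonneg (hInn y)]
        exact hIb y
    calc |_ + _| ≤ |_| + |_| := abs_add_le _ _
      _ ≤ (3 * C₃)⁻¹ * (LI * ‖x - y‖) +
          ((3 * C₃)⁻¹ * (3 * C₃)⁻¹ * (3 * (Lρ * ‖x - y‖))) * BI := add_le_add h1 h2
      _ = LT * ‖x - y‖ := by rw [hLTdef]; ring
  -- bounds on the Maxwellian building blocks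
  have hgmono : ∀ t : ℝ, C₃ ≤ t → (2 * π * t) ^ (-(3:ℝ)/2) ≤ gmax := by
    intro t ht
    rw [hgmaxdef]
    exact Real.rpow_le_rpow_of_nonpos (by positivity) (by nlinarith only [hπ, ht, hC₃]) (by norm_num)
  have hgLip : ∀ s t : ℝ, C₃ ≤ s → C₃ ≤ t →
      |(2 * π * s) ^ (-(3:ℝ)/2) - (2 * π * t) ^ (-(3:ℝ)/2)| ≤ Lg * |s - t| := by
    intro s t hs ht
    have hder : ∀ u ∈ Set.Ici C₃, HasDerivAt (fun u : ℝ => (2 * π * u) ^ (-(3:ℝ)/2))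
        (2 * π * (-(3:ℝ)/2) * (2 * π * u) ^ (-(3:ℝ)/2 - 1)) u := by
      intro u hu
      have hu' : C₃ ≤ u := hu
      have hu0 : 0 < 2 * π * u := by nlinarith only [hπ, hu', hC₃]
      have h1 : HasDerivAt (fun u : ℝ => 2 * π * u) (2 * π) u := by
        simpa using (hasDerivAt_id u).const_mul (2 * π)
      have h2 := (Real.hasDerivAt_rpow_const (x := 2 * π * u) (p := -(3:ℝ)/2)
        (Or.inl hu0.ne')).comp u h1
      simp only [Function.comp_def] at h2
      refine h2.congr_deriv ?_
      ring
    have hdiff : ∀ u ∈ Set.Ici C₃,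
        DifferentiableAt ℝ (fun u : ℝ => (2 * π * u) ^ (-(3:ℝ)/2)) u :=
      fun u hu => (hder u hu).differentiableAt
    have hbound : ∀ u ∈ Set.Ici C₃,
        ‖deriv (fun u : ℝ => (2 * π * u) ^ (-(3:ℝ)/2)) u‖ ≤ Lg := by
      intro u hu
      have hu' : C₃ ≤ u := hu
      have hu0 : 0 < 2 * π * u := by nlinarith only [hπ, hu', hC₃]
      rw [(hder u hu).deriv, Real.norm_eq_abs]
      have hposp : 0 < (2 * π * u) ^ (-(3:ℝ)/2 - 1) := Real.rpow_pos_of_pos hu0 _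
      have hpow : (2 * π * u) ^ (-(3:ℝ)/2 - 1) ≤ (2 * π * C₃) ^ (-(3:ℝ)/2 - 1) :=
        Real.rpow_le_rpow_of_nonpos (by positivity) (by nlinarith only [hπ, hu', hC₃]) (by norm_num)
      rw [abs_mul, abs_of_pos hposp,
        show |2 * π * (-(3:ℝ)/2)| = 2 * π * (3/2) by
          rw [abs_of_nonpos (by nlinarith only [hπ])]; ring]
      rw [hLgdef]
      calc 2 * π * (3/2) * (2 * π * u) ^ (-(3:ℝ)/2 - 1)
          ≤ 2 * π * (3/2) * (2 * π * C₃) ^ (-(3:ℝ)/2 - 1) :=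
            mul_le_mul_of_nonneg_left hpow (by positivity)
        _ = 2 * π * (3 / 2) * (2 * π * C₃) ^ (-(3:ℝ)/2 - 1) := by ring
    have key := (convex_Ici C₃).norm_image_sub_le_of_norm_deriv_le hdiff hbound ht hs
    simpa [Real.norm_eq_abs] using key
  have hExp : ∀ (x v : E3), Real.exp (-‖v - bulkX f x‖ ^ 2 / (2 * tempX f x)) ≤
      EK * Real.exp (-‖v‖ ^ 2 / (4 * C₂)) := by
    intro x v
    rw [hEKdef, ← Real.exp_add]
    apply Real.exp_le_exp.mpr
    have hT1 : C₃ < tempX f x := hTlb x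
    have hT2 : tempX f x < C₂ := hTub x
    have hN : ‖v‖ ^ 2 ≤ 2 * ‖v - bulkX f x‖ ^ 2 + 2 * C₂ ^ 2 := by
      have h1 : ‖v‖ ≤ ‖v - bulkX f x‖ + ‖bulkX f x‖ := by
        calc ‖v‖ = ‖(v - bulkX f x) + bulkX f x‖ := by rw [sub_add_cancel]
          _ ≤ ‖v - bulkX f x‖ + ‖bulkX f x‖ := norm_add_le _ _
      nlinarith only [h1, hUub x, norm_nonneg (v - bulkX f x), norm_nonneg (bulkX f x),
        norm_nonneg v, sq_nonneg (‖v - bulkX f x‖ - ‖bulkX f x‖)]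
    have hNn : (0:ℝ) ≤ ‖v - bulkX f x‖ ^ 2 := sq_nonneg _
    have e2 : ‖v - bulkX f x‖ ^ 2 / (2 * C₂) ≤ ‖v - bulkX f x‖ ^ 2 / (2 * tempX f x) := by
      rw [div_le_div_iff₀ (by positivity) (by linarith : (0:ℝ) < 2 * tempX f x)]
      nlinarith only [hNn, hT2]
    have e1 : ‖v‖ ^ 2 / (4 * C₂) ≤ ‖v - bulkX f x‖ ^ 2 / (2 * C₂) + C₂ / 2 := by
      rw [div_le_iff₀ (by positivity : (0:ℝ) < 4 * C₂)]
      have hexpand : (‖v - bulkX f x‖ ^ 2 / (2 * C₂) + C₂ / 2) * (4 * C₂) =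
          2 * ‖v - bulkX f x‖ ^ 2 + 2 * C₂ ^ 2 := by
        field_simp
        ring
      rw [hexpand]
      exact hN
    have e3 : C₂ / 2 ≤ C₂ ^ 2 / (2 * C₃) := by
      rw [div_le_div_iff₀ two_pos (by positivity)]
      nlinarith only [hC₂, hC₃, hC32]
    rw [neg_div, neg_div]
    linarith
  have hMpos : ∀ p : E3 × E3, 0 < maxwX f p := by
    intro p
    apply mul_pos (mul_pos (lt_trans hC₃ (hρlb p.1)) _) (Real.exp_pos _)
    exact Real.rpow_pos_of_pos (by nlinarith only [hTlb p.1, hπ, hC₃]) _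
  have hMb : ∀ p : E3 × E3, |maxwX f p| ≤
      C₂ * gmax * (EK * Real.exp (-‖p.2‖ ^ 2 / (4 * C₂))) := by
    intro p
    rw [abs_of_pos (hMpos p)]
    have hgp : (0:ℝ) < (2 * π * tempX f p.1) ^ (-(3:ℝ)/2) :=
      Real.rpow_pos_of_pos (by nlinarith only [hTlb p.1, hπ, hC₃]) _
    have h1 : densX f p.1 * (2 * π * tempX f p.1) ^ (-(3:ℝ)/2) ≤ C₂ * gmax :=
      mul_le_mul (hρub p.1).le (hgmono _ (hTlb p.1).le) hgp.le hC₂.le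
    exact mul_le_mul h1 (hExp p.1 p.2) (Real.exp_pos _).le
      (mul_nonneg hC₂.le hgmaxpos.le)
  -- on-ball exponential decay
  have hExpBall : ∀ (p₀ p : E3 × E3), ‖p - p₀‖ ≤ 1 →
      Real.exp (-‖p.2 - bulkX f p.1‖ ^ 2 / (2 * tempX f p.1)) ≤
        EKK * Real.exp (-‖p₀.2‖ ^ 2 / (8 * C₂)) := by
    intro p₀ p hball
    have hv : ‖p.2 - p₀.2‖ ≤ 1 := le_trans (norm_snd_le (p - p₀)) hball
    have hv2 : ‖p₀.2‖ ^ 2 ≤ 2 * ‖p.2‖ ^ 2 + 2 := by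
      have h1 : ‖p₀.2‖ ≤ ‖p.2‖ + 1 := by
        calc ‖p₀.2‖ = ‖p.2 + (p₀.2 - p.2)‖ := by rw [add_sub_cancel]
          _ ≤ ‖p.2‖ + ‖p₀.2 - p.2‖ := norm_add_le _ _
          _ = ‖p.2‖ + ‖p.2 - p₀.2‖ := by rw [norm_sub_rev]
          _ ≤ ‖p.2‖ + 1 := by linarith
      nlinarith only [h1, norm_nonneg p.2, norm_nonneg p₀.2, sq_nonneg (‖p.2‖ - 1)]
    calc Real.exp (-‖p.2 - bulkX f p.1‖ ^ 2 / (2 * tempX f p.1))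
        ≤ EK * Real.exp (-‖p.2‖ ^ 2 / (4 * C₂)) := hExp p.1 p.2
      _ ≤ EKK * Real.exp (-‖p₀.2‖ ^ 2 / (8 * C₂)) := by
          have harg : -‖p.2‖ ^ 2 / (4 * C₂) ≤ 1 / (4 * C₂) + -‖p₀.2‖ ^ 2 / (8 * C₂) := by
            have h8 : (0:ℝ) < 8 * C₂ := by positivity
            have e1 : ‖p₀.2‖ ^ 2 / (8 * C₂) ≤ (2 * ‖p.2‖ ^ 2 + 2) / (8 * C₂) :=
              (div_le_div_iff_of_pos_right h8).mpr hv2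
            have e2 : (2 * ‖p.2‖ ^ 2 + 2) / (8 * C₂) =
                ‖p.2‖ ^ 2 / (4 * C₂) + 1 / (4 * C₂) := by
              field_simp
              ring
            rw [neg_div, neg_div]
            rw [e2] at e1
            linarith
          calc EK * Real.exp (-‖p.2‖ ^ 2 / (4 * C₂))
              ≤ EK * Real.exp (1 / (4 * C₂) + -‖p₀.2‖ ^ 2 / (8 * C₂)) :=
                mul_le_mul_of_nonneg_left (Real.exp_le_exp.mpr harg) hEKpos.le
            _ = EKK * Real.exp (-‖p₀.2‖ ^ 2 / (8 * C₂)) := by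
                rw [hEKKdef, Real.exp_add]
                ring
  -- centered Lipschitz bound for the Maxwellian
  have hMLip : ∀ (p₀ p : E3 × E3), ‖p - p₀‖ ≤ 1 →
      |maxwX f p - maxwX f p₀| ≤
        (EKK * Real.exp (-‖p₀.2‖ ^ 2 / (8 * C₂)) * (A0 + C₂ * gmax * QA ‖p₀.2‖)) *
          ‖p - p₀‖ := by
    intro p₀ p hball
    obtain ⟨D, hDdef⟩ : ∃ z : ℝ, z = EKK * Real.exp (-‖p₀.2‖ ^ 2 / (8 * C₂)) := ⟨_, rfl⟩
    have hDpos : 0 < D := by rw [hDdef]; exact mul_pos hEKKpos (Real.exp_pos _)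
    have hxx : ‖p.1 - p₀.1‖ ≤ ‖p - p₀‖ := norm_fst_le (p - p₀)
    have hvv : ‖p.2 - p₀.2‖ ≤ ‖p - p₀‖ := norm_snd_le (p - p₀)
    have hpp : (0:ℝ) ≤ ‖p - p₀‖ := norm_nonneg _
    have hvb : ‖p.2‖ ≤ ‖p₀.2‖ + 1 := by
      calc ‖p.2‖ = ‖p₀.2 + (p.2 - p₀.2)‖ := by rw [add_sub_cancel]
        _ ≤ ‖p₀.2‖ + ‖p.2 - p₀.2‖ := norm_add_le _ _
        _ ≤ ‖p₀.2‖ + 1 := by linarith [le_trans hvv hball]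
    have hTx := hTlb p.1
    have hTx0 := hTlb p₀.1
    have hEp : Real.exp (-‖p.2 - bulkX f p.1‖ ^ 2 / (2 * tempX f p.1)) ≤ D := by
      rw [hDdef]; exact hExpBall p₀ p hball
    have hEp0 : Real.exp (-‖p₀.2 - bulkX f p₀.1‖ ^ 2 / (2 * tempX f p₀.1)) ≤ D := by
      rw [hDdef]; exact hExpBall p₀ p₀ (by simp)
    have hgx : (2 * π * tempX f p.1) ^ (-(3:ℝ)/2) ≤ gmax := hgmono _ hTx.le
    have hgx0 : (2 * π * tempX f p₀.1) ^ (-(3:ℝ)/2) ≤ gmax := hgmono _ hTx0.le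
    have hgxpos : 0 < (2 * π * tempX f p.1) ^ (-(3:ℝ)/2) :=
      Real.rpow_pos_of_pos (by nlinarith only [hπ, hTx, hC₃]) _
    have hgx0pos : 0 < (2 * π * tempX f p₀.1) ^ (-(3:ℝ)/2) :=
      Real.rpow_pos_of_pos (by nlinarith only [hπ, hTx0, hC₃]) _
    have hNb : ‖p.2 - bulkX f p.1‖ ≤ ‖p₀.2‖ + 1 + C₂ := by
      calc ‖p.2 - bulkX f p.1‖ ≤ ‖p.2‖ + ‖bulkX f p.1‖ := norm_sub_le _ _
        _ ≤ ‖p₀.2‖ + 1 + C₂ := by linarith [hUub p.1]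
    have hN0b : ‖p₀.2 - bulkX f p₀.1‖ ≤ ‖p₀.2‖ + 1 + C₂ := by
      calc ‖p₀.2 - bulkX f p₀.1‖ ≤ ‖p₀.2‖ + ‖bulkX f p₀.1‖ := norm_sub_le _ _
        _ ≤ ‖p₀.2‖ + 1 + C₂ := by linarith [hUub p₀.1, norm_nonneg p₀.2]
    have hRnn : (0:ℝ) ≤ ‖p₀.2‖ + 1 + C₂ := by linarith [norm_nonneg p₀.2]
    have hNd : |‖p.2 - bulkX f p.1‖ - ‖p₀.2 - bulkX f p₀.1‖| ≤ (1 + LU) * ‖p - p₀‖ := by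
      calc |‖p.2 - bulkX f p.1‖ - ‖p₀.2 - bulkX f p₀.1‖|
          ≤ ‖(p.2 - bulkX f p.1) - (p₀.2 - bulkX f p₀.1)‖ := abs_norm_sub_norm_le _ _
        _ = ‖(p.2 - p₀.2) - (bulkX f p.1 - bulkX f p₀.1)‖ := by
            rw [show (p.2 - bulkX f p.1) - (p₀.2 - bulkX f p₀.1) =
              (p.2 - p₀.2) - (bulkX f p.1 - bulkX f p₀.1) by abel]
        _ ≤ ‖p.2 - p₀.2‖ + ‖bulkX f p.1 - bulkX f p₀.1‖ := norm_sub_le _ _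
        _ ≤ ‖p - p₀‖ + LU * ‖p - p₀‖ := by
            have h6 := (hULip p.1 p₀.1).trans (mul_le_mul_of_nonneg_left hxx hLUpos.le)
            linarith
        _ = (1 + LU) * ‖p - p₀‖ := by ring
    have hsq : |‖p.2 - bulkX f p.1‖ ^ 2 - ‖p₀.2 - bulkX f p₀.1‖ ^ 2| ≤
        ((1 + LU) * ‖p - p₀‖) * (2 * (‖p₀.2‖ + 1 + C₂)) := by
      rw [show ‖p.2 - bulkX f p.1‖ ^ 2 - ‖p₀.2 - bulkX f p₀.1‖ ^ 2 =
        (‖p.2 - bulkX f p.1‖ - ‖p₀.2 - bulkX f p₀.1‖) *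
          (‖p.2 - bulkX f p.1‖ + ‖p₀.2 - bulkX f p₀.1‖) by ring, abs_mul,
        abs_of_nonneg (by positivity : (0:ℝ) ≤ ‖p.2 - bulkX f p.1‖ + ‖p₀.2 - bulkX f p₀.1‖)]
      apply mul_le_mul hNd (by linarith) (by positivity)
      exact mul_nonneg (by linarith [hLUpos] : (0:ℝ) ≤ 1 + LU) hpp
    have hTd : |tempX f p.1 - tempX f p₀.1| ≤ LT * ‖p - p₀‖ :=
      (hTLip p.1 p₀.1).trans (mul_le_mul_of_nonneg_left hxx hLTpos.le)
    have h2T : (2:ℝ) * C₃ ≤ 2 * tempX f p.1 := by linarith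
    have h2T0 : (2:ℝ) * C₃ ≤ 2 * tempX f p₀.1 := by linarith
    have h2C : (0:ℝ) < 2 * C₃ := by linarith
    have hinvd : |(2 * tempX f p.1)⁻¹ - (2 * tempX f p₀.1)⁻¹| ≤
        (2 * C₃)⁻¹ * (2 * C₃)⁻¹ * (2 * (LT * ‖p - p₀‖)) := by
      apply inv_sub_inv_abs_le h2C h2T h2T0
      rw [show 2 * tempX f p.1 - 2 * tempX f p₀.1 =
        2 * (tempX f p.1 - tempX f p₀.1) by ring, abs_mul, show |(2:ℝ)| = 2 by norm_num]
      linarith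
    have hArgDiff : |(-‖p.2 - bulkX f p.1‖ ^ 2 / (2 * tempX f p.1)) -
        (-‖p₀.2 - bulkX f p₀.1‖ ^ 2 / (2 * tempX f p₀.1))| ≤ QA ‖p₀.2‖ * ‖p - p₀‖ := by
      have hsplit : (-‖p.2 - bulkX f p.1‖ ^ 2 / (2 * tempX f p.1)) -
          (-‖p₀.2 - bulkX f p₀.1‖ ^ 2 / (2 * tempX f p₀.1)) =
          -((‖p.2 - bulkX f p.1‖ ^ 2 - ‖p₀.2 - bulkX f p₀.1‖ ^ 2) * (2 * tempX f p.1)⁻¹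
            + ‖p₀.2 - bulkX f p₀.1‖ ^ 2 * ((2 * tempX f p.1)⁻¹ - (2 * tempX f p₀.1)⁻¹)) := by
        rw [neg_div, neg_div, div_eq_mul_inv, div_eq_mul_inv]
        ring
      rw [hsplit, abs_neg]
      have hInvx : |(2 * tempX f p.1)⁻¹| ≤ (2 * C₃)⁻¹ := by
        rw [abs_of_pos (inv_pos.mpr (by linarith : (0:ℝ) < 2 * tempX f p.1))]
        exact inv_anti₀ h2C h2T
      have hnn1 : (0:ℝ) ≤ ((1 + LU) * ‖p - p₀‖) * (2 * (‖p₀.2‖ + 1 + C₂)) :=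
        mul_nonneg (mul_nonneg (by linarith) hpp) (by linarith)
      have ht1 : |(‖p.2 - bulkX f p.1‖ ^ 2 - ‖p₀.2 - bulkX f p₀.1‖ ^ 2) *
          (2 * tempX f p.1)⁻¹| ≤
          (((1 + LU) * ‖p - p₀‖) * (2 * (‖p₀.2‖ + 1 + C₂))) * (2 * C₃)⁻¹ := by
        rw [abs_mul]
        exact mul_le_mul hsq hInvx (abs_nonneg _) hnn1
      have hsqb : ‖p₀.2 - bulkX f p₀.1‖ ^ 2 ≤ (‖p₀.2‖ + 1 + C₂) ^ 2 := by
        nlinarith only [norm_nonneg (p₀.2 - bulkX f p₀.1), hN0b, hRnn]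
      have ht2 : |‖p₀.2 - bulkX f p₀.1‖ ^ 2 *
          ((2 * tempX f p.1)⁻¹ - (2 * tempX f p₀.1)⁻¹)| ≤
          (‖p₀.2‖ + 1 + C₂) ^ 2 * ((2 * C₃)⁻¹ * (2 * C₃)⁻¹ * (2 * (LT * ‖p - p₀‖))) := by
        rw [abs_mul, abs_of_nonneg (sq_nonneg _)]
        exact mul_le_mul hsqb hinvd (abs_nonneg _) (sq_nonneg _)
      refine le_trans (abs_add_le _ _) (le_trans (add_le_add ht1 ht2) (le_of_eq ?_))
      rw [congrFun hQAdef ‖p₀.2‖]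
      ring
    have hEdiff : |Real.exp (-‖p.2 - bulkX f p.1‖ ^ 2 / (2 * tempX f p.1)) -
        Real.exp (-‖p₀.2 - bulkX f p₀.1‖ ^ 2 / (2 * tempX f p₀.1))| ≤
        D * (QA ‖p₀.2‖ * ‖p - p₀‖) := by
      refine le_trans (abs_exp_sub_exp_le _ _) ?_
      exact mul_le_mul (max_le hEp hEp0) hArgDiff (abs_nonneg _) hDpos.le
    have hdρ : |densX f p.1 - densX f p₀.1| ≤ Lρ * ‖p - p₀‖ :=
      (hρLip p.1 p₀.1).trans (mul_le_mul_of_nonneg_left hxx hLρpos.le)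
    have hdg : |(2 * π * tempX f p.1) ^ (-(3:ℝ)/2) -
        (2 * π * tempX f p₀.1) ^ (-(3:ℝ)/2)| ≤ Lg * (LT * ‖p - p₀‖) :=
      le_trans (hgLip _ _ hTx.le hTx0.le) (mul_le_mul_of_nonneg_left hTd hLgpos.le)
    have hdecomp : maxwX f p - maxwX f p₀ =
        (densX f p.1 - densX f p₀.1) * (2 * π * tempX f p.1) ^ (-(3:ℝ)/2) *
          Real.exp (-‖p.2 - bulkX f p.1‖ ^ 2 / (2 * tempX f p.1)) +
        densX f p₀.1 * ((2 * π * tempX f p.1) ^ (-(3:ℝ)/2) -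
            (2 * π * tempX f p₀.1) ^ (-(3:ℝ)/2)) *
          Real.exp (-‖p.2 - bulkX f p.1‖ ^ 2 / (2 * tempX f p.1)) +
        densX f p₀.1 * (2 * π * tempX f p₀.1) ^ (-(3:ℝ)/2) *
          (Real.exp (-‖p.2 - bulkX f p.1‖ ^ 2 / (2 * tempX f p.1)) -
            Real.exp (-‖p₀.2 - bulkX f p₀.1‖ ^ 2 / (2 * tempX f p₀.1))) := by
      simp only [maxwX]
      ring
    rw [hdecomp]
    have hρ0nn : 0 ≤ densX f p₀.1 := hρnn p₀.1
    have hρ0b : densX f p₀.1 ≤ C₂ := (hρub p₀.1).le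
    have hEppos : 0 < Real.exp (-‖p.2 - bulkX f p.1‖ ^ 2 / (2 * tempX f p.1)) :=
      Real.exp_pos _
    have ht1 : |(densX f p.1 - densX f p₀.1) * (2 * π * tempX f p.1) ^ (-(3:ℝ)/2) *
        Real.exp (-‖p.2 - bulkX f p.1‖ ^ 2 / (2 * tempX f p.1))| ≤
        Lρ * ‖p - p₀‖ * gmax * D := by
      rw [abs_mul, abs_mul, abs_of_pos hgxpos, abs_of_pos hEppos]
      exact mul_le_mul (mul_le_mul hdρ hgx hgxpos.le (mul_nonneg hLρpos.le hpp)) hEp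
        hEppos.le (mul_nonneg (mul_nonneg hLρpos.le hpp) hgmaxpos.le)
    have ht2 : |densX f p₀.1 * ((2 * π * tempX f p.1) ^ (-(3:ℝ)/2) -
        (2 * π * tempX f p₀.1) ^ (-(3:ℝ)/2)) *
        Real.exp (-‖p.2 - bulkX f p.1‖ ^ 2 / (2 * tempX f p.1))| ≤
        C₂ * (Lg * (LT * ‖p - p₀‖)) * D := by
      rw [abs_mul, abs_mul, abs_of_nonneg hρ0nn, abs_of_pos hEppos]
      exact mul_le_mul (mul_le_mul hρ0b hdg (abs_nonneg _) hC₂.le) hEp hEppos.le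
        (mul_nonneg hC₂.le (mul_nonneg hLgpos.le (mul_nonneg hLTpos.le hpp)))
    have ht3 : |densX f p₀.1 * (2 * π * tempX f p₀.1) ^ (-(3:ℝ)/2) *
        (Real.exp (-‖p.2 - bulkX f p.1‖ ^ 2 / (2 * tempX f p.1)) -
          Real.exp (-‖p₀.2 - bulkX f p₀.1‖ ^ 2 / (2 * tempX f p₀.1)))| ≤
        C₂ * gmax * (D * (QA ‖p₀.2‖ * ‖p - p₀‖)) := by
      rw [abs_mul, abs_mul, abs_of_nonneg hρ0nn, abs_of_pos hgx0pos]
      exact mul_le_mul (mul_le_mul hρ0b hgx0 hgx0pos.le hC₂.le) hEdiff (abs_nonneg _)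
        (mul_nonneg hC₂.le hgmaxpos.le)
    refine le_trans (abs_add_three _ _ _) ?_
    refine le_trans (add_le_add (add_le_add ht1 ht2) ht3) (le_of_eq ?_)
    rw [hDdef, hA0def]
    ring
  have hDM : ∀ p₀ : E3 × E3, ‖fderiv ℝ (maxwX f) p₀‖ ≤
      EKK * Real.exp (-‖p₀.2‖ ^ 2 / (8 * C₂)) * (A0 + C₂ * gmax * QA ‖p₀.2‖) := by
    intro p₀
    have hcoeff : 0 ≤ EKK * Real.exp (-‖p₀.2‖ ^ 2 / (8 * C₂)) * (A0 + C₂ * gmax * QA ‖p₀.2‖) := by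
      apply mul_nonneg (mul_nonneg hEKKpos.le (Real.exp_pos _).le)
      have := hQAnn ‖p₀.2‖ (norm_nonneg _)
      have : 0 ≤ C₂ * gmax * QA ‖p₀.2‖ := mul_nonneg (mul_nonneg hC₂.le hgmaxpos.le) this
      linarith
    apply norm_fderiv_le_of_lip' ℝ hcoeff
    filter_upwards [Metric.closedBall_mem_nhds p₀ one_pos] with p hp
    rw [Real.norm_eq_abs]
    exact hMLip p₀ p (by rwa [Metric.mem_closedBall, dist_eq_norm] at hp)
  -- weighted bounds
  have hwM1 : ∀ p : E3 × E3, (1 + ‖p.2‖ ^ q) * |maxwX f p| ≤ M1 := by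
    intro p
    have hply : 1 + ‖p.2‖ ^ q ≤ Kq1 * Real.exp ((4 * C₂)⁻¹ * ‖p.2‖ ^ 2) := by
      rw [hKq1def]
      exact poly_le_exp (by positivity) hq0 ‖p.2‖ (norm_nonneg _)
    calc (1 + ‖p.2‖ ^ q) * |maxwX f p|
        ≤ (Kq1 * Real.exp ((4 * C₂)⁻¹ * ‖p.2‖ ^ 2)) *
          (C₂ * gmax * (EK * Real.exp (-‖p.2‖ ^ 2 / (4 * C₂)))) :=
          mul_le_mul hply (hMb p) (abs_nonneg _)
            (mul_nonneg hKq1pos.le (Real.exp_pos _).le)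
      _ = C₂ * gmax * EK * Kq1 *
          (Real.exp ((4 * C₂)⁻¹ * ‖p.2‖ ^ 2) * Real.exp (-‖p.2‖ ^ 2 / (4 * C₂))) := by ring
      _ = M1 := by
          rw [← Real.exp_add,
            show (4 * C₂)⁻¹ * ‖p.2‖ ^ 2 + -‖p.2‖ ^ 2 / (4 * C₂) = 0 by
              rw [neg_div, div_eq_mul_inv]; ring,
            Real.exp_zero, hM1def]
          ring
  have hwM2 : ∀ p : E3 × E3, (1 + ‖p.2‖ ^ q) * |‖fderiv ℝ (maxwX f) p‖| ≤ M2 := by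
    intro p
    rw [abs_norm]
    have h0 := hDM p
    have hwq : (0:ℝ) ≤ 1 + ‖p.2‖ ^ q := (hwpos p.2).le
    have hX : (0:ℝ) < Real.exp (-‖p.2‖ ^ 2 / (8 * C₂)) := Real.exp_pos _
    have hY : (0:ℝ) < Real.exp ((16 * C₂)⁻¹ * ‖p.2‖ ^ 2) := Real.exp_pos _
    have hB : (0:ℝ) < A0 + C₂ * gmax * Q2 := by
      have h7 := mul_nonneg (mul_nonneg hC₂.le hgmaxpos.le) hQ2nn
      linarith
    have hinv2 : (0:ℝ) ≤ (2 * C₃)⁻¹ := inv_nonneg.mpr (by linarith)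
    have hrn := norm_nonneg p.2
    have hQA : QA ‖p.2‖ ≤ Q2 * (1 + ‖p.2‖) ^ 2 := by
      rw [congrFun hQAdef ‖p.2‖, hQ2def]
      have h1 : ‖p.2‖ + 1 + C₂ ≤ (1 + C₂) * (1 + ‖p.2‖) := by
        nlinarith only [mul_nonneg hC₂.le hrn]
      have h1' : (1:ℝ) + ‖p.2‖ ≤ (1 + ‖p.2‖) ^ 2 := by nlinarith only [hrn]
      have hRb : ‖p.2‖ + 1 + C₂ ≤ (1 + C₂) * (1 + ‖p.2‖) ^ 2 := by
        nlinarith only [h1, mul_le_mul_of_nonneg_left h1' (by linarith : (0:ℝ) ≤ 1 + C₂)]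
      have hc : (0:ℝ) ≤ (2 * C₃)⁻¹ * 2 * (1 + LU) :=
        mul_nonneg (mul_nonneg hinv2 (by norm_num)) (by linarith)
      have hterm1 : (2 * C₃)⁻¹ * (2 * (‖p.2‖ + 1 + C₂) * (1 + LU)) ≤
          (2 * C₃)⁻¹ * 2 * (1 + C₂) * (1 + LU) * (1 + ‖p.2‖) ^ 2 := by
        nlinarith only [mul_le_mul_of_nonneg_left hRb hc]
      have hK : (0:ℝ) ≤ (2 * C₃)⁻¹ * (2 * C₃)⁻¹ * (2 * LT) :=
        mul_nonneg (mul_nonneg hinv2 hinv2) (by linarith)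
      have hRnn : (0:ℝ) ≤ ‖p.2‖ + 1 + C₂ := by linarith
      have hsqR : (‖p.2‖ + 1 + C₂) ^ 2 ≤ (1 + C₂) ^ 2 * (1 + ‖p.2‖) ^ 2 := by
        nlinarith only [h1, hRnn]
      have hterm2 : (‖p.2‖ + 1 + C₂) ^ 2 * ((2 * C₃)⁻¹ * (2 * C₃)⁻¹ * (2 * LT)) ≤
          (1 + C₂) ^ 2 * ((2 * C₃)⁻¹ * (2 * C₃)⁻¹ * (2 * LT)) * (1 + ‖p.2‖) ^ 2 := by
        nlinarith only [mul_le_mul_of_nonneg_right hsqR hK]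
      linarith
    have hA0b : A0 + C₂ * gmax * QA ‖p.2‖ ≤ (A0 + C₂ * gmax * Q2) * (1 + ‖p.2‖) ^ 2 := by
      have hcg : (0:ℝ) ≤ C₂ * gmax := mul_nonneg hC₂.le hgmaxpos.le
      have h3 := mul_le_mul_of_nonneg_left hQA hcg
      have h4 : A0 ≤ A0 * (1 + ‖p.2‖) ^ 2 := by nlinarith only [hone p.2, hA0pos]
      nlinarith only [h3, h4]
    have hrpow2 : ‖p.2‖ ^ (2:ℝ) = ‖p.2‖ ^ 2 := by
      rw [show (2:ℝ) = ((2:ℕ):ℝ) by norm_num, Real.rpow_natCast]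
    have hw2 : (1 + ‖p.2‖) ^ 2 ≤ 2 * (1 + ‖p.2‖ ^ (2:ℝ)) := by
      rw [hrpow2]
      nlinarith only [sq_nonneg (1 - ‖p.2‖)]
    have hply2 : 1 + ‖p.2‖ ^ (2:ℝ) ≤ K22 * Real.exp ((16 * C₂)⁻¹ * ‖p.2‖ ^ 2) := by
      rw [hK22def]
      exact poly_le_exp (by positivity) (by norm_num) ‖p.2‖ (norm_nonneg _)
    have hplyq : 1 + ‖p.2‖ ^ q ≤ Kq2 * Real.exp ((16 * C₂)⁻¹ * ‖p.2‖ ^ 2) := by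
      rw [hKq2def]
      exact poly_le_exp (by positivity) hq0 ‖p.2‖ (norm_nonneg _)
    have hXYY : Real.exp (-‖p.2‖ ^ 2 / (8 * C₂)) *
        (Real.exp ((16 * C₂)⁻¹ * ‖p.2‖ ^ 2) * Real.exp ((16 * C₂)⁻¹ * ‖p.2‖ ^ 2)) = 1 := by
      rw [← Real.exp_add, ← Real.exp_add, ← Real.exp_zero]
      congr 1
      have hC₂0 : C₂ ≠ 0 := hC₂.ne'
      field_simp
      ring
    calc (1 + ‖p.2‖ ^ q) * ‖fderiv ℝ (maxwX f) p‖
        ≤ (1 + ‖p.2‖ ^ q) *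
          (EKK * Real.exp (-‖p.2‖ ^ 2 / (8 * C₂)) * (A0 + C₂ * gmax * QA ‖p.2‖)) :=
          mul_le_mul_of_nonneg_left h0 hwq
      _ ≤ (1 + ‖p.2‖ ^ q) * (EKK * Real.exp (-‖p.2‖ ^ 2 / (8 * C₂)) *
          ((A0 + C₂ * gmax * Q2) * (1 + ‖p.2‖) ^ 2)) := by
          apply mul_le_mul_of_nonneg_left _ hwq
          exact mul_le_mul_of_nonneg_left hA0b (mul_nonneg hEKKpos.le hX.le)
      _ ≤ (1 + ‖p.2‖ ^ q) * (EKK * Real.exp (-‖p.2‖ ^ 2 / (8 * C₂)) *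
          ((A0 + C₂ * gmax * Q2) * (2 * (1 + ‖p.2‖ ^ (2:ℝ))))) := by
          apply mul_le_mul_of_nonneg_left _ hwq
          apply mul_le_mul_of_nonneg_left _ (mul_nonneg hEKKpos.le hX.le)
          exact mul_le_mul_of_nonneg_left hw2 hB.le
      _ ≤ (Kq2 * Real.exp ((16 * C₂)⁻¹ * ‖p.2‖ ^ 2)) *
          (EKK * Real.exp (-‖p.2‖ ^ 2 / (8 * C₂)) *
          ((A0 + C₂ * gmax * Q2) * (2 * (K22 * Real.exp ((16 * C₂)⁻¹ * ‖p.2‖ ^ 2))))) := by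
          have hnn5 : (0:ℝ) ≤ 1 + ‖p.2‖ ^ (2:ℝ) := by
            have := Real.rpow_nonneg (norm_nonneg p.2) (2:ℝ)
            linarith
          apply mul_le_mul hplyq _ _ (mul_nonneg hKq2pos.le hY.le)
          · apply mul_le_mul_of_nonneg_left _ (mul_nonneg hEKKpos.le hX.le)
            apply mul_le_mul_of_nonneg_left _ hB.le
            exact mul_le_mul_of_nonneg_left hply2 (by norm_num)
          · apply mul_nonneg (mul_nonneg hEKKpos.le hX.le)
            apply mul_nonneg hB.le
            exact mul_nonneg (by norm_num) hnn5
      _ = (EKK * (A0 + C₂ * gmax * Q2) * (2 * (K22 * Kq2))) *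
          (Real.exp (-‖p.2‖ ^ 2 / (8 * C₂)) *
            (Real.exp ((16 * C₂)⁻¹ * ‖p.2‖ ^ 2) * Real.exp ((16 * C₂)⁻¹ * ‖p.2‖ ^ 2))) := by
          ring
      _ = M2 := by rw [hXYY, hM2def]; ring
  have h1 : wnormX q (maxwX f) ≤ ENNReal.ofReal M1 := wnorm_le_of_forall hwM1
  have h2 : wnormX q (fun p => ‖fderiv ℝ (maxwX f) p‖) ≤ ENNReal.ofReal M2 :=
    wnorm_le_of_forall hwM2
  -- lower bound for the right-hand side
  have hlow : ENNReal.ofReal (C₃ / J) ≤ wnormX q f := by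
    by_contra hcon
    push_neg at hcon
    have hne : wnormX q f ≠ ⊤ := hcon.ne_top
    have hWle : wnormX q f ≤ ENNReal.ofReal (wnormX q f).toReal :=
      le_of_eq (ENNReal.ofReal_toReal hne).symm
    have hWlt : (wnormX q f).toReal < C₃ / J := ENNReal.toReal_lt_of_lt_ofReal hcon
    have hptw := forall_of_wnorm hq0 hfc ENNReal.toReal_nonneg hWle
    have hρle : densX f 0 ≤ (wnormX q f).toReal * J := by
      have hmono : (fun v : E3 => f (0, v)) ≤ fun v : E3 =>
          (wnormX q f).toReal * ((1 + ‖v‖) ^ 2 * (1 + ‖v‖ ^ q)⁻¹) := by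
        intro v
        have h1 := hptw (0, v)
        rw [abs_of_nonneg (hf0 _)] at h1
        have h2 : f (0, v) ≤ (wnormX q f).toReal * (1 + ‖v‖ ^ q)⁻¹ := by
          rw [le_mul_inv_iff₀ (hwpos v)]
          calc f (0, v) * (1 + ‖v‖ ^ q) = (1 + ‖v‖ ^ q) * f (0, v) := mul_comm _ _
            _ ≤ (wnormX q f).toReal := h1
        calc f (0, v) ≤ (wnormX q f).toReal * (1 + ‖v‖ ^ q)⁻¹ := h2
          _ ≤ (wnormX q f).toReal * ((1 + ‖v‖) ^ 2 * (1 + ‖v‖ ^ q)⁻¹) := by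
              have ha : (0:ℝ) ≤ (wnormX q f).toReal * (1 + ‖v‖ ^ q)⁻¹ :=
                mul_nonneg ENNReal.toReal_nonneg (hwinv_pos v).le
              have hb2 : (0:ℝ) ≤ (1 + ‖v‖) ^ 2 - 1 := by nlinarith only [hone v]
              nlinarith only [mul_nonneg ha hb2]
      calc densX f 0 ≤ ∫ v, (wnormX q f).toReal * ((1 + ‖v‖) ^ 2 * (1 + ‖v‖ ^ q)⁻¹) :=
            integral_mono (hint0 0) ((integrable_dom hq).const_mul _) hmono
        _ = (wnormX q f).toReal * J := by rw [integral_const_mul, ← hJdef]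
    have hJ1 : (wnormX q f).toReal * J < C₃ := by
      have h5 := mul_lt_mul_of_pos_right hWlt hJpos
      rwa [div_mul_cancel₀ _ hJpos.ne'] at h5
    linarith [hρlb 0]
  calc wnormX q (maxwX f) + wnormX q (fun p => ‖fderiv ℝ (maxwX f) p‖)
      ≤ ENNReal.ofReal M1 + ENNReal.ofReal M2 := add_le_add h1 h2
    _ = ENNReal.ofReal (M1 + M2) := (ENNReal.ofReal_add hM1pos.le hM2pos.le).symm
    _ ≤ ENNReal.ofReal Cfin * ENNReal.ofReal (C₃ / J) := by
        rw [← ENNReal.ofReal_mul hCfinpos.le]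
        apply ENNReal.ofReal_le_ofReal
        have hid : Cfin * (C₃ / J) = (M1 + M2) + C₃ / J := by
          rw [hCfindef]
          field_simp
        rw [hid]
        have : 0 ≤ C₃ / J := div_nonneg hC₃.le hJpos.le
        linarith
    _ ≤ ENNReal.ofReal Cfin * (wnormX q f + wnormX q (fun p => ‖fderiv ℝ f p‖)) := by
        exact mul_le_mul_right (hlow.trans le_self_add) _


end
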